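/- Let x♮ be feasible in min{f(x) : A(x)=b, x ∈ K}. There exist μ > 0 and r, ℓ ≥ 0 such that the problem is (μ,r,ℓ)-sharp around x♮ if and only if 0 lies in the interior of the set ∂f(x♮) − range(A*) − (K* ∩ (x♮)^⊥). -/

import Mathlib

open Pointwise

/-- A finite convex function on a finite-dimensional space has a subgradient at 0. -/
lemma exists_subgrad_aux {E : Type*} [NormedAddCommGroup E] [NormedSpace ℝ E]
    [FiniteDimensional ℝ E] {q : E → ℝ} (hq : ConvexOn ℝ Set.univ q) :
    ∃ L : E →L[ℝ] ℝ, ∀ w, q 0 + L w ≤ q w := by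
  have hcont : Continuous q := by
    rw [← continuousOn_univ]; exact hq.continuousOn isOpen_univ
  set s : Set (E × ℝ) := {p | q p.1 < p.2} with hs
  have hopen : IsOpen s := isOpen_lt (hcont.comp continuous_fst) continuous_snd
  have hconv : Convex ℝ s := by
    rintro ⟨w1, t1⟩ h1 ⟨w2, t2⟩ h2 a bb ha hbb hab
    simp only [hs, Set.mem_setOf_eq] at h1 h2 ⊢
    have hcomb := hq.2 (Set.mem_univ w1) (Set.mem_univ w2) ha hbb hab
    simp only [smul_eq_mul] at hcomb
    have hlt : a * q w1 + bb * q w2 < a * t1 + bb * t2 := by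
      rcases lt_or_eq_of_le ha with ha' | ha'
      · have h1' := mul_lt_mul_of_pos_left h1 ha'
        have h2' := mul_le_mul_of_nonneg_left h2.le hbb
        linarith
      · have hbb' : (0:ℝ) < bb := by rw [← ha'] at hab; linarith
        have h2' := mul_lt_mul_of_pos_left h2 hbb'
        have h1' := mul_le_mul_of_nonneg_left h1.le ha
        linarith
    exact lt_of_le_of_lt hcomb hlt
  have hnot : ((0 : E), q 0) ∉ s := by simp [hs]
  obtain ⟨F, hF⟩ := geometric_hahn_banach_point_open hconv hopen hnot
  set c := F ((0:E), (1:ℝ)) with hc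
  have h00 : ((0:E), (0:ℝ)) = (0 : E × ℝ) := rfl
  have hFsplit : ∀ (w : E) (t : ℝ), F (w, t) = F (w, 0) + t * c := by
    intro w t
    have hwt : (w, t) = (w, (0:ℝ)) + t • ((0:E), (1:ℝ)) := by
      simp [Prod.ext_iff]
    rw [hwt, map_add, map_smul, smul_eq_mul]
  have hcpos : 0 < c := by
    have h := hF ((0:E), q 0 + 1) (by simp [hs])
    rw [hFsplit 0 (q 0), hFsplit 0 (q 0 + 1), h00, map_zero] at h
    nlinarith
  have hkey : ∀ w, q 0 * c ≤ F (w, 0) + q w * c := by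
    intro w
    have h2 : ∀ ε > (0:ℝ), q 0 * c ≤ F (w, 0) + q w * c + ε := by
      intro ε hε
      have hmem : (w, q w + ε / c) ∈ s := by
        simp only [hs, Set.mem_setOf_eq]
        have : 0 < ε / c := div_pos hε hcpos
        linarith
      have h3 := hF _ hmem
      rw [hFsplit 0 (q 0), hFsplit w _, h00, map_zero] at h3
      have hεc : (ε / c) * c = ε := div_mul_cancel₀ _ (ne_of_gt hcpos)
      nlinarith
    exact le_of_forall_pos_le_add h2
  refine ⟨(-(c⁻¹)) • (F.comp (ContinuousLinearMap.inl ℝ E ℝ)), fun w => ?_⟩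
  have h3 : q 0 - q w ≤ F (w, 0) / c := by
    rw [le_div_iff₀ hcpos]
    nlinarith [hkey w]
  simp only [ContinuousLinearMap.coe_smul', Pi.smul_apply,
    ContinuousLinearMap.coe_comp', Function.comp_apply,
    ContinuousLinearMap.inl_apply, smul_eq_mul]
  rw [div_eq_inv_mul] at h3
  linarith

set_option maxHeartbeats 1000000 in
set_option synthInstance.maxHeartbeats 200000 in
/-- For a feasible `x0` of `min{f(x) : A x = b, x ∈ K}`, there exist
`μ > 0` and `r, ℓ ≥ 0` making the problem `(μ,r,ℓ)`-sharp around `x0` iff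
`0 ∈ int(∂f(x0) − range A* − (K* ∩ x0^⊥))`. -/
theorem sharp_exists_iff_zero_mem_interior
    {V W : Type*} [NormedAddCommGroup V] [NormedSpace ℝ V] [FiniteDimensional ℝ V]
    [NormedAddCommGroup W] [NormedSpace ℝ W] [FiniteDimensional ℝ W]
    (f : V → ℝ) (hf : ConvexOn ℝ Set.univ f)
    (A : V →L[ℝ] W) (K : Set V) (hKclosed : IsClosed K) (hKconv : Convex ℝ K)
    (hKcone : ∀ c : ℝ, 0 ≤ c → ∀ x ∈ K, c • x ∈ K)
    (x0 : V) (hx0K : x0 ∈ K) (b : W) (hb : b = A x0) :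
    (∃ μ > (0 : ℝ), ∃ r ≥ (0 : ℝ), ∃ ℓ ≥ (0 : ℝ), ∀ x : V,
        (f x + r * ‖A x - b‖ + ℓ * Metric.infDist x K) - f x0 ≥ μ * ‖x - x0‖) ↔
      (0 : V →L[ℝ] ℝ) ∈ interior
        ({g : V →L[ℝ] ℝ | ∀ x : V, f x ≥ f x0 + g (x - x0)}
          - Set.range (fun y : W →L[ℝ] ℝ => y.comp A)
          - {z : V →L[ℝ] ℝ | (∀ v ∈ K, 0 ≤ z v) ∧ z x0 = 0}) := by
  have h0K : (0:V) ∈ K := by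
    have := hKcone 0 le_rfl x0 hx0K; simpa using this
  constructor
  · rintro ⟨μ, hμ, r, hr, ℓ, hℓ, hsharp⟩
    have hmem : ∀ g : V →L[ℝ] ℝ, ‖g‖ ≤ μ →
        g ∈ ({g : V →L[ℝ] ℝ | ∀ x : V, f x ≥ f x0 + g (x - x0)}
          - Set.range (fun y : W →L[ℝ] ℝ => y.comp A)
          - {z : V →L[ℝ] ℝ | (∀ v ∈ K, 0 ≤ z v) ∧ z x0 = 0}) := by
      intro g hg
      set p : V → ℝ := fun x => f x - f x0 - g (x - x0) with hp
      have hp0 : ∀ x, 0 ≤ p x + r * ‖A x - b‖ + ℓ * Metric.infDist x K := by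
        intro x
        have h1 := hsharp x
        have h2 : g (x - x0) ≤ μ * ‖x - x0‖ := by
          calc g (x - x0) ≤ |g (x - x0)| := le_abs_self _
            _ = ‖g (x - x0)‖ := (Real.norm_eq_abs _).symm
            _ ≤ ‖g‖ * ‖x - x0‖ := g.le_opNorm _
            _ ≤ μ * ‖x - x0‖ := mul_le_mul_of_nonneg_right hg (norm_nonneg _)
        simp only [hp]; linarith
      set T : W × V → Set ℝ := fun w =>
        {c | ∃ x : V, ∃ k, k ∈ K ∧
          c = p x + r * ‖A x - b - w.1‖ + ℓ * ‖x - k - w.2‖} with hT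
      have hTne : ∀ w, (T w).Nonempty := fun w => ⟨_, x0, x0, hx0K, rfl⟩
      have hTbdd : ∀ w, ∀ c ∈ T w, -(r * ‖w.1‖) - ℓ * ‖w.2‖ ≤ c := by
        rintro w c ⟨x, k, hk, rfl⟩
        have hd : Metric.infDist x K ≤ ‖x - k‖ := by
          rw [← dist_eq_norm]; exact Metric.infDist_le_dist_of_mem hk
        have hpx := hp0 x
        have h1 : ‖A x - b‖ - ‖A x - b - w.1‖ ≤ ‖w.1‖ := by
          have := norm_sub_norm_le (A x - b) (A x - b - w.1)
          simpa using this
        have h2 : ‖x - k‖ - ‖x - k - w.2‖ ≤ ‖w.2‖ := by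
          have := norm_sub_norm_le (x - k) (x - k - w.2)
          simpa using this
        have e1 := mul_le_mul_of_nonneg_left hd hℓ
        have e2 := mul_le_mul_of_nonneg_left h1 hr
        have e3 := mul_le_mul_of_nonneg_left h2 hℓ
        nlinarith
      have hbddBelow : ∀ w, BddBelow (T w) :=
        fun w => ⟨_, fun c hc => hTbdd w c hc⟩
      set Q : W × V → ℝ := fun w => sInf (T w) with hQ
      have hQle : ∀ (w : W × V) (x k : V), k ∈ K →
          Q w ≤ p x + r * ‖A x - b - w.1‖ + ℓ * ‖x - k - w.2‖ :=
        fun w x k hk => csInf_le (hbddBelow w) ⟨x, k, hk, rfl⟩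
      have hQconv : ConvexOn ℝ Set.univ Q := by
        refine ⟨convex_univ, ?_⟩
        rintro ⟨u1, v1⟩ - ⟨u2, v2⟩ - aa bb ha hbb hab
        simp only [smul_eq_mul]
        refine le_of_forall_pos_le_add fun ε hε => ?_
        obtain ⟨c1, hc1T, hc1⟩ := exists_lt_of_csInf_lt (hTne (u1, v1))
          (lt_add_of_pos_right _ (by linarith : (0:ℝ) < ε/2))
        obtain ⟨c2, hc2T, hc2⟩ := exists_lt_of_csInf_lt (hTne (u2, v2))
          (lt_add_of_pos_right _ (by linarith : (0:ℝ) < ε/2))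
        obtain ⟨x1, k1, hk1, rfl⟩ := hc1T
        obtain ⟨x2, k2, hk2, rfl⟩ := hc2T
        have hkmem : aa • k1 + bb • k2 ∈ K := hKconv hk1 hk2 ha hbb hab
        have hQc := hQle (aa • (u1, v1) + bb • (u2, v2)) (aa • x1 + bb • x2)
          (aa • k1 + bb • k2) hkmem
        have hw1 : (aa • ((u1, v1) : W × V) + bb • (u2, v2)).1 = aa • u1 + bb • u2 := rfl
        have hw2 : (aa • ((u1, v1) : W × V) + bb • (u2, v2)).2 = aa • v1 + bb • v2 := rfl
        rw [hw1, hw2] at hQc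
        have hfx0 : aa * f x0 + bb * f x0 = f x0 := by rw [← add_mul, hab, one_mul]
        have hpconv : p (aa • x1 + bb • x2) ≤ aa * p x1 + bb * p x2 := by
          have hfc := hf.2 (Set.mem_univ x1) (Set.mem_univ x2) ha hbb hab
          simp only [smul_eq_mul] at hfc
          have hx0c : aa • x0 + bb • x0 = x0 := Convex.combo_self hab x0
          have hid : aa • x1 + bb • x2 - x0 = aa • (x1 - x0) + bb • (x2 - x0) := by
            conv_lhs => rw [← hx0c]
            rw [smul_sub, smul_sub]
            abel
          have hgc : g (aa • x1 + bb • x2 - x0) = aa * g (x1 - x0) + bb * g (x2 - x0) := by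
            rw [hid, map_add, map_smul, map_smul, smul_eq_mul, smul_eq_mul]
          simp only [hp]
          rw [hgc]
          linarith
        have ht2 : ‖A (aa • x1 + bb • x2) - b - (aa • u1 + bb • u2)‖ ≤
            aa * ‖A x1 - b - u1‖ + bb * ‖A x2 - b - u2‖ := by
          have hbc : aa • b + bb • b = b := Convex.combo_self hab b
          have hv : A (aa • x1 + bb • x2) - b - (aa • u1 + bb • u2) =
              aa • (A x1 - b - u1) + bb • (A x2 - b - u2) := by
            rw [map_add, map_smul, map_smul]
            conv_lhs => rw [← hbc]
            rw [smul_sub, smul_sub, smul_sub, smul_sub]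
            abel
          rw [hv]
          calc ‖aa • (A x1 - b - u1) + bb • (A x2 - b - u2)‖
              ≤ ‖aa • (A x1 - b - u1)‖ + ‖bb • (A x2 - b - u2)‖ := norm_add_le _ _
            _ = aa * ‖A x1 - b - u1‖ + bb * ‖A x2 - b - u2‖ := by
                rw [norm_smul, norm_smul, Real.norm_eq_abs, Real.norm_eq_abs,
                  abs_of_nonneg ha, abs_of_nonneg hbb]
        have ht3 : ‖(aa • x1 + bb • x2) - (aa • k1 + bb • k2) - (aa • v1 + bb • v2)‖ ≤
            aa * ‖x1 - k1 - v1‖ + bb * ‖x2 - k2 - v2‖ := by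
          have hv : (aa • x1 + bb • x2) - (aa • k1 + bb • k2) - (aa • v1 + bb • v2) =
              aa • (x1 - k1 - v1) + bb • (x2 - k2 - v2) := by
            rw [smul_sub, smul_sub, smul_sub, smul_sub]; abel
          rw [hv]
          calc ‖aa • (x1 - k1 - v1) + bb • (x2 - k2 - v2)‖
              ≤ ‖aa • (x1 - k1 - v1)‖ + ‖bb • (x2 - k2 - v2)‖ := norm_add_le _ _
            _ = aa * ‖x1 - k1 - v1‖ + bb * ‖x2 - k2 - v2‖ := by
                rw [norm_smul, norm_smul, Real.norm_eq_abs, Real.norm_eq_abs,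
                  abs_of_nonneg ha, abs_of_nonneg hbb]
        have hc1' : p x1 + r * ‖A x1 - b - u1‖ + ℓ * ‖x1 - k1 - v1‖ ≤
            Q (u1, v1) + ε/2 := hc1.le
        have hc2' : p x2 + r * ‖A x2 - b - u2‖ + ℓ * ‖x2 - k2 - v2‖ ≤
            Q (u2, v2) + ε/2 := hc2.le
        have e2 := mul_le_mul_of_nonneg_left ht2 hr
        have e3 := mul_le_mul_of_nonneg_left ht3 hℓ
        have e4 := mul_le_mul_of_nonneg_left hc1' ha
        have e5 := mul_le_mul_of_nonneg_left hc2' hbb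
        have hεe : aa * (ε/2) + bb * (ε/2) = ε/2 := by
          rw [← add_mul, hab]; ring
        calc Q (aa • ((u1, v1) : W × V) + bb • (u2, v2))
            ≤ p (aa • x1 + bb • x2) +
              r * ‖A (aa • x1 + bb • x2) - b - (aa • u1 + bb • u2)‖ +
              ℓ * ‖aa • x1 + bb • x2 - (aa • k1 + bb • k2) - (aa • v1 + bb • v2)‖ := hQc
          _ ≤ (aa * p x1 + bb * p x2) +
              r * (aa * ‖A x1 - b - u1‖ + bb * ‖A x2 - b - u2‖) +
              ℓ * (aa * ‖x1 - k1 - v1‖ + bb * ‖x2 - k2 - v2‖) := by linarith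
          _ = aa * (p x1 + r * ‖A x1 - b - u1‖ + ℓ * ‖x1 - k1 - v1‖) +
              bb * (p x2 + r * ‖A x2 - b - u2‖ + ℓ * ‖x2 - k2 - v2‖) := by ring
          _ ≤ aa * (Q (u1, v1) + ε/2) + bb * (Q (u2, v2) + ε/2) := add_le_add e4 e5
          _ = aa * Q (u1, v1) + bb * Q (u2, v2) + (aa * (ε/2) + bb * (ε/2)) := by ring
          _ = aa * Q (u1, v1) + bb * Q (u2, v2) + ε/2 := by rw [hεe]
          _ ≤ aa * Q (u1, v1) + bb * Q (u2, v2) + ε := by linarith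
      have hQ0 : 0 ≤ Q ((0:W), (0:V)) := by
        apply le_csInf (hTne _)
        rintro c ⟨x, k, hk, rfl⟩
        have hd : Metric.infDist x K ≤ ‖x - k‖ := by
          rw [← dist_eq_norm]; exact Metric.infDist_le_dist_of_mem hk
        have hpx := hp0 x
        have e1 := mul_le_mul_of_nonneg_left hd hℓ
        simp only [sub_zero]
        nlinarith
      obtain ⟨L, hL⟩ := exists_subgrad_aux hQconv
      set y : W →L[ℝ] ℝ := L.comp (ContinuousLinearMap.inl ℝ W V) with hy
      set z : V →L[ℝ] ℝ := L.comp (ContinuousLinearMap.inr ℝ W V) with hz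
      have hLsplit : ∀ (u : W) (v : V), L (u, v) = y u + z v := by
        intro u v
        simp only [hy, hz, ContinuousLinearMap.coe_comp', Function.comp_apply,
          ContinuousLinearMap.inl_apply, ContinuousLinearMap.inr_apply]
        rw [← map_add]
        congr 1
        simp [Prod.ext_iff]
      have hkey : ∀ x, ∀ k ∈ K, y (A x - b) + z (x - k) ≤ p x := by
        intro x k hk
        have h1 := hL (A x - b, x - k)
        have h2 := hQle (A x - b, x - k) x k hk
        simp only [sub_self, norm_zero, mul_zero, add_zero] at h2
        rw [hLsplit] at h1
        have hQ00 : Q (0 : W × V) = Q ((0:W), (0:V)) := rfl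
        rw [hQ00] at h1
        linarith
      have hpx0 : p x0 = 0 := by simp [hp]
      have hAx0 : A x0 - b = 0 := by rw [hb, sub_self]
      have hzx0 : z x0 = 0 := by
        have h2K : (2:ℝ) • x0 ∈ K := hKcone 2 (by norm_num) x0 hx0K
        have e1 := hkey x0 0 h0K
        have e2 := hkey x0 ((2:ℝ) • x0) h2K
        rw [hAx0, map_zero, hpx0] at e1 e2
        rw [sub_zero] at e1
        have hid : x0 - (2:ℝ) • x0 = -x0 := by rw [two_smul]; abel
        rw [hid, map_neg] at e2
        linarith
      have hzK : ∀ v ∈ K, 0 ≤ z v := by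
        intro v hv
        have e := hkey x0 v hv
        rw [hAx0, map_zero, hpx0, map_sub, hzx0] at e
        linarith
      have hsubgrad : ∀ x, f x ≥ f x0 + (g + y.comp A + z) (x - x0) := by
        intro x
        have e := hkey x 0 h0K
        rw [sub_zero] at e
        have hval : (g + y.comp A + z) (x - x0) = g (x - x0) + y (A x - b) + z x := by
          simp only [ContinuousLinearMap.add_apply, ContinuousLinearMap.coe_comp',
            Function.comp_apply]
          rw [map_sub A, ← hb, map_sub z, hzx0, sub_zero]
        rw [ge_iff_le, hval]
        simp only [hp] at e
        linarith
      have hrepr : ((g + y.comp A + z) - y.comp A) - z = g := by abel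
      rw [← hrepr]
      exact Set.sub_mem_sub (Set.sub_mem_sub hsubgrad ⟨y, rfl⟩) ⟨hzK, hzx0⟩
    exact mem_interior.mpr ⟨Metric.ball 0 μ,
      fun g hg => hmem g (le_of_lt (by simpa using mem_ball_zero_iff.mp hg)),
      Metric.isOpen_ball, Metric.mem_ball_self hμ⟩
  · intro h0
    obtain ⟨ε, hε, hball⟩ := Metric.mem_nhds_iff.mp (mem_interior_iff_mem_nhds.mp h0)
    set ε' := ε / 2 with hε'
    have hε'pos : 0 < ε' := by positivity
    have hcb : Metric.closedBall (0 : V →L[ℝ] ℝ) ε' ⊆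
        ({g : V →L[ℝ] ℝ | ∀ x : V, f x ≥ f x0 + g (x - x0)}
          - Set.range (fun y : W →L[ℝ] ℝ => y.comp A)
          - {z : V →L[ℝ] ℝ | (∀ v ∈ K, 0 ≤ z v) ∧ z x0 = 0}) := by
      intro g hg
      apply hball
      rw [Metric.mem_ball]
      have := Metric.mem_closedBall.mp hg
      have : dist g 0 ≤ ε/2 := this
      linarith
    have hcompact : IsCompact (Metric.closedBall (0 : V →L[ℝ] ℝ) ε') :=
      isCompact_closedBall _ _
    obtain ⟨t, hts, htfin, htcover⟩ := finite_cover_balls_of_compact hcompact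
      (by positivity : (0:ℝ) < ε'/2)
    have hdec : ∀ gi : V →L[ℝ] ℝ, gi ∈ t → ∃ (a : V →L[ℝ] ℝ) (yy : W →L[ℝ] ℝ)
        (zz : V →L[ℝ] ℝ), (∀ x, f x ≥ f x0 + a (x - x0)) ∧ (∀ v ∈ K, 0 ≤ zz v) ∧
        zz x0 = 0 ∧ a - yy.comp A - zz = gi := by
      intro gi hgi
      have hmem := hcb (hts hgi)
      obtain ⟨w, hw, zz, hzz, hwz⟩ := Set.mem_sub.mp hmem
      obtain ⟨a, ha, ρ, hρ, haρ⟩ := Set.mem_sub.mp hw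
      obtain ⟨yy, rfl⟩ := hρ
      exact ⟨a, yy, zz, ha, hzz.1, hzz.2, by rw [haρ, hwz]⟩
    choose! av yv zv hav hzvK hzvx0 heqv using hdec
    set tf := htfin.toFinset with htf
    refine ⟨ε'/2, by positivity, ∑ gi ∈ tf, ‖yv gi‖,
      Finset.sum_nonneg fun _ _ => norm_nonneg _, ∑ gi ∈ tf, ‖zv gi‖,
      Finset.sum_nonneg fun _ _ => norm_nonneg _, fun x => ?_⟩
    rcases eq_or_ne x x0 with rfl | hne
    · simp [← hb, Metric.infDist_zero_of_mem hx0K]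
    · have hu : x - x0 ≠ 0 := sub_ne_zero.mpr hne
      obtain ⟨g1, hg1norm, hg1val⟩ := exists_dual_vector ℝ (x - x0) (norm_ne_zero_iff.mpr hu)
      set g := ε' • g1 with hgdef
      have hgcb : g ∈ Metric.closedBall (0 : V →L[ℝ] ℝ) ε' := by
        rw [Metric.mem_closedBall, dist_zero_right, hgdef]
        calc ‖ε' • g1‖ ≤ ‖ε'‖ * ‖g1‖ := ContinuousLinearMap.opNorm_smul_le _ _
          _ = ε' := by rw [Real.norm_eq_abs, abs_of_pos hε'pos, hg1norm, mul_one]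
      obtain ⟨gi, hgi, hgball⟩ := Set.mem_iUnion₂.mp (htcover hgcb)
      have hgi_lb : (ε'/2) * ‖x - x0‖ ≤ gi (x - x0) := by
        have hdist : ‖g - gi‖ < ε'/2 := by
          have h := Metric.mem_ball.mp hgball; rwa [dist_eq_norm] at h
        have h1 : g (x - x0) = ε' * ‖x - x0‖ := by
          rw [hgdef]
          simp only [ContinuousLinearMap.coe_smul', Pi.smul_apply, smul_eq_mul]
          rw [hg1val, RCLike.ofReal_real_eq_id]
          rfl
        have h2 : (g - gi) (x - x0) ≤ (ε'/2) * ‖x - x0‖ := by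
          calc (g - gi) (x - x0) ≤ |(g - gi) (x - x0)| := le_abs_self _
            _ = ‖(g - gi) (x - x0)‖ := (Real.norm_eq_abs _).symm
            _ ≤ ‖g - gi‖ * ‖x - x0‖ := (g - gi).le_opNorm _
            _ ≤ (ε'/2) * ‖x - x0‖ := mul_le_mul_of_nonneg_right hdist.le (norm_nonneg _)
        have h3 : (g - gi) (x - x0) = g (x - x0) - gi (x - x0) := rfl
        linarith
      have hgit : gi ∈ tf := htfin.mem_toFinset.mpr hgi
      have hyle : ‖yv gi‖ ≤ ∑ gj ∈ tf, ‖yv gj‖ :=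
        Finset.single_le_sum (fun _ _ => norm_nonneg _) hgit
      have hzle : ‖zv gi‖ ≤ ∑ gj ∈ tf, ‖zv gj‖ :=
        Finset.single_le_sum (fun _ _ => norm_nonneg _) hgit
      have hsubgrad := hav gi hgi x
      have haval : (av gi) (x - x0) = gi (x - x0) + (yv gi) (A x - b) + (zv gi) x := by
        have hcongr := congrArg (fun (F : V →L[ℝ] ℝ) => F (x - x0)) (heqv gi hgi)
        simp only [ContinuousLinearMap.sub_apply, ContinuousLinearMap.coe_comp',
          Function.comp_apply] at hcongr
        have hA : A (x - x0) = A x - b := by rw [map_sub, ← hb]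
        have hzv : (zv gi) (x - x0) = (zv gi) x := by
          rw [map_sub, hzvx0 gi hgi, sub_zero]
        rw [hA, hzv] at hcongr
        linarith
      have hybound : -((∑ gj ∈ tf, ‖yv gj‖) * ‖A x - b‖) ≤ (yv gi) (A x - b) := by
        have h4 : |(yv gi) (A x - b)| ≤ ‖yv gi‖ * ‖A x - b‖ := by
          rw [← Real.norm_eq_abs]; exact (yv gi).le_opNorm _
        have h5 := mul_le_mul_of_nonneg_right hyle (norm_nonneg (A x - b))
        have h6 := neg_abs_le ((yv gi) (A x - b))
        linarith
      have hzbound : -((∑ gj ∈ tf, ‖zv gj‖) * Metric.infDist x K) ≤ (zv gi) x := by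
        obtain ⟨k, hkK, hkdist⟩ := hKclosed.exists_infDist_eq_dist ⟨x0, hx0K⟩ x
        have h5 : (zv gi) x = (zv gi) k + (zv gi) (x - k) := by rw [map_sub]; ring
        have h6 : |(zv gi) (x - k)| ≤ ‖zv gi‖ * ‖x - k‖ := by
          rw [← Real.norm_eq_abs]; exact (zv gi).le_opNorm _
        have h7 : 0 ≤ (zv gi) k := hzvK gi hgi k hkK
        have h8 : ‖x - k‖ = Metric.infDist x K := by rw [hkdist, dist_eq_norm]
        rw [h8] at h6
        have h9 := mul_le_mul_of_nonneg_right hzle (Metric.infDist_nonneg (s := K) (x := x))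
        have h10 := neg_abs_le ((zv gi) (x - k))
        linarith
      linarith [hsubgrad, haval, hgi_lb, hybound, hzbound]
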